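/- Fix l ≥ 1 and b ≥ 1, and let Y_{-l+1}, Y_{-l+2}, ... be a real sequence in [0,1] with moving averages X_i = (1/l)Σ_{j=1}^l Y_{i-j}. Define estimates Ŷ_i recursively from the quantized values [X_{i+1}]_b and the initial values Y_{-l+1}^{-1} as in the recursion Ŷ_i = l[X_{i+1}]_b − Σ (previous true or estimated Y's). Then the errors E_i = Y_i − Ŷ_i satisfy |E_i| ≤ 2^i · l · 2^{−b} for all i ≥ 0. -/

import Mathlib

noncomputable def quantB (b : ℕ) (x : ℝ) : ℝ := ⌊(2 : ℝ) ^ b * x⌋ / 2 ^ b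

lemma quantB_err (b : ℕ) (x : ℝ) : |x - quantB b x| ≤ (2 : ℝ) ^ (-(b : ℤ)) := by
  have h2 : (0:ℝ) < 2 ^ b := by positivity
  have h1 : ((⌊(2:ℝ)^b * x⌋ : ℤ) : ℝ) ≤ 2^b * x := Int.floor_le _
  have h2' : (2:ℝ)^b * x < (⌊(2:ℝ)^b * x⌋ : ℤ) + 1 := Int.lt_floor_add_one _
  have hz : (2:ℝ) ^ (-(b:ℤ)) = ((2:ℝ)^b)⁻¹ := by
    rw [zpow_neg, zpow_natCast]
  rw [quantB, hz, abs_le]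
  constructor
  · have e1 : ((⌊(2:ℝ)^b * x⌋ : ℤ) : ℝ)/2^b ≤ x := by
      rw [div_le_iff₀ h2]; nlinarith
    have : (0:ℝ) ≤ ((2:ℝ)^b)⁻¹ := by positivity
    linarith
  · rw [sub_le_iff_le_add, inv_eq_one_div, ← add_div, le_div_iff₀ h2]
    nlinarith

/-- Error propagation for recursively decoding a moving-average process from quantized values:
if `X_i = (1/l) Σ_{j=1}^l Y_{i-j}` and the estimates `Ŷ_i` are defined by the recursion
`Ŷ_i = l·[X_{i+1}]_b − Σ_{j=1}^{l-1} (Y_{i-j} if i−j < 0, else Ŷ_{i-j})`, then the errors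
`E_i = Y_i − Ŷ_i` satisfy `|E_i| ≤ 2^i · l · 2^{−b}` for all `i ≥ 0`. -/
theorem moving_average_estimate_error (l b : ℕ) (hl : 1 ≤ l) (hb : 1 ≤ b)
    (Y : ℤ → ℝ) (hY : ∀ i, Y i ∈ Set.Icc (0 : ℝ) 1)
    (X : ℤ → ℝ) (hX : ∀ i : ℤ, X i = (1 / (l : ℝ)) * ∑ j ∈ Finset.Icc 1 l, Y (i - j))
    (Yhat : ℕ → ℝ)
    (hrec : ∀ i : ℕ, Yhat i = (l : ℝ) * quantB b (X ((i : ℤ) + 1)) -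
      ∑ j ∈ Finset.Icc 1 (l - 1),
        (if (i : ℤ) - (j : ℤ) < 0 then Y ((i : ℤ) - (j : ℤ)) else Yhat (i - j))) :
    ∀ i : ℕ, |Y i - Yhat i| ≤ 2 ^ i * l * (2 : ℝ) ^ (-(b : ℤ)) := by
  have hl0 : (0:ℝ) < (l:ℝ) := by exact_mod_cast hl
  have hpos : (0:ℝ) ≤ (l:ℝ) * (2:ℝ)^(-(b:ℤ)) := by positivity
  intro i
  induction i using Nat.strong_induction_on with
  | _ i ih =>
    -- key sum identity: l * X (i+1) = Y i + Σ_{j∈Icc 1 (l-1)} Y (i - j)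
    have hsum : (l:ℝ) * X ((i:ℤ)+1) = Y (i:ℤ) + ∑ j ∈ Finset.Icc 1 (l-1), Y ((i:ℤ) - (j:ℤ)) := by
      rw [hX]
      rw [← Finset.Ico_add_one_right_eq_Icc, Finset.sum_Ico_eq_sum_range]
      have hll : l + 1 - 1 = (l-1) + 1 := by omega
      rw [hll, Finset.sum_range_succ']
      have e0 : ((i:ℤ)+1 - ((1+0 : ℕ) : ℤ)) = (i:ℤ) := by push_cast; ring
      rw [e0]
      have e1 : ∀ k ∈ Finset.range (l-1),
          Y ((i:ℤ)+1 - ((1+(k+1) : ℕ) : ℤ)) = Y ((i:ℤ) - ((1+k : ℕ) : ℤ)) := by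
        intro k _; congr 1; push_cast; ring
      rw [Finset.sum_congr rfl e1]
      rw [← Finset.Ico_add_one_right_eq_Icc, Finset.sum_Ico_eq_sum_range]
      have hll2 : l - 1 + 1 - 1 = l - 1 := by omega
      rw [hll2]
      field_simp
      ring
    have hterm : ∀ j ∈ Finset.Icc 1 (l-1),
        Y ((i:ℤ) - (j:ℤ)) - (if (i:ℤ)-(j:ℤ) < 0 then (0:ℝ) else (Y (((i-j:ℕ)):ℤ) - Yhat (i-j)))
        = (if (i:ℤ)-(j:ℤ) < 0 then Y ((i:ℤ)-(j:ℤ)) else Yhat (i-j)) := by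
      intro j hj
      split_ifs with h
      · ring
      · have hji : j ≤ i := by omega
        have hcast : ((i:ℤ) - (j:ℤ)) = (((i - j : ℕ)):ℤ) := by omega
        rw [hcast]; ring
    have hE : Y (i:ℤ) - Yhat i = (l:ℝ) * (X ((i:ℤ)+1) - quantB b (X ((i:ℤ)+1))) -
        ∑ j ∈ Finset.Icc 1 (l-1),
          (if (i:ℤ)-(j:ℤ) < 0 then (0:ℝ) else (Y (((i-j:ℕ)):ℤ) - Yhat (i-j))) := by
      rw [hrec i, mul_sub, hsum, ← Finset.sum_congr rfl hterm, Finset.sum_sub_distrib]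
      ring
    -- triangle inequality
    have tri : |Y (i:ℤ) - Yhat i| ≤
        (l:ℝ) * |X ((i:ℤ)+1) - quantB b (X ((i:ℤ)+1))| +
        ∑ j ∈ Finset.Icc 1 (l-1),
          |if (i:ℤ)-(j:ℤ) < 0 then (0:ℝ) else (Y (((i-j:ℕ)):ℤ) - Yhat (i-j))| := by
      rw [hE]
      refine (abs_sub _ _).trans ?_
      gcongr
      · rw [abs_mul, abs_of_nonneg hl0.le]
      · exact Finset.abs_sum_le_sum_abs _ _
    have hterm2 : ∀ j ∈ Finset.Icc 1 (l-1),
        |if (i:ℤ)-(j:ℤ) < 0 then (0:ℝ) else (Y (((i-j:ℕ)):ℤ) - Yhat (i-j))|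
        ≤ (if (i:ℤ)-(j:ℤ) < 0 then 0 else (2:ℝ)^(i-j)) * ((l:ℝ)*(2:ℝ)^(-(b:ℤ))) := by
      intro j hj
      simp only [Finset.mem_Icc] at hj
      split_ifs with h
      · simp
      · have hji : j ≤ i := by omega
        have hlt : i - j < i := by omega
        have := ih (i-j) hlt
        calc |Y (((i-j:ℕ)):ℤ) - Yhat (i-j)| ≤ 2^(i-j) * (l:ℝ) * (2:ℝ)^(-(b:ℤ)) := this
          _ = (2:ℝ)^(i-j) * ((l:ℝ)*(2:ℝ)^(-(b:ℤ))) := by ring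
    have hgeom : ∑ j ∈ Finset.Icc 1 (l-1),
        (if (i:ℤ)-(j:ℤ) < 0 then (0:ℝ) else (2:ℝ)^(i-j)) ≤ 2^i - 1 := by
      have step1 : ∑ j ∈ Finset.Icc 1 (l-1),
          (if (i:ℤ)-(j:ℤ) < 0 then (0:ℝ) else (2:ℝ)^(i-j))
          = ∑ j ∈ (Finset.Icc 1 (l-1)).filter (fun j : ℕ => ¬((i:ℤ)-(j:ℤ) < 0)),
            (2:ℝ)^(i-j) := by
        rw [Finset.sum_filter]
        refine Finset.sum_congr rfl fun j _ => ?_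
        by_cases h : (i:ℤ)-(j:ℤ) < 0 <;> simp [h]
      rw [step1]
      have step2 : ∑ j ∈ (Finset.Icc 1 (l-1)).filter (fun j : ℕ => ¬((i:ℤ)-(j:ℤ) < 0)),
          (2:ℝ)^(i-j) ≤ ∑ j ∈ Finset.Icc 1 i, (2:ℝ)^(i-j) := by
        apply Finset.sum_le_sum_of_subset_of_nonneg
        · intro j hj
          simp only [Finset.mem_filter, Finset.mem_Icc] at hj ⊢
          omega
        · intro j _ _; positivity
      refine step2.trans ?_
      have step3 : ∑ j ∈ Finset.Icc 1 i, (2:ℝ)^(i-j) = ∑ k ∈ Finset.range i, (2:ℝ)^k := by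
        rw [← Finset.Ico_add_one_right_eq_Icc, Finset.sum_Ico_eq_sum_range]
        have : i + 1 - 1 = i := by omega
        rw [this]
        rw [← Finset.sum_range_reflect (fun k => (2:ℝ)^k) i]
        refine Finset.sum_congr rfl fun k hk => ?_
        congr 1
        simp only [Finset.mem_range] at hk
        omega
      rw [step3]
      have := geom_sum_eq (by norm_num : (2:ℝ) ≠ 1) i
      rw [this]
      norm_num
    -- combine
    have hq : (l:ℝ) * |X ((i:ℤ)+1) - quantB b (X ((i:ℤ)+1))| ≤ (l:ℝ) * (2:ℝ)^(-(b:ℤ)) :=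
      mul_le_mul_of_nonneg_left (quantB_err b _) hl0.le
    have hsum2 : ∑ j ∈ Finset.Icc 1 (l-1),
        |if (i:ℤ)-(j:ℤ) < 0 then (0:ℝ) else (Y (((i-j:ℕ)):ℤ) - Yhat (i-j))|
        ≤ (2^i - 1) * ((l:ℝ)*(2:ℝ)^(-(b:ℤ))) := by
      calc _ ≤ ∑ j ∈ Finset.Icc 1 (l-1),
            (if (i:ℤ)-(j:ℤ) < 0 then (0:ℝ) else (2:ℝ)^(i-j)) * ((l:ℝ)*(2:ℝ)^(-(b:ℤ))) :=
          Finset.sum_le_sum hterm2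
        _ = (∑ j ∈ Finset.Icc 1 (l-1),
            (if (i:ℤ)-(j:ℤ) < 0 then (0:ℝ) else (2:ℝ)^(i-j))) * ((l:ℝ)*(2:ℝ)^(-(b:ℤ))) := by
          rw [Finset.sum_mul]
        _ ≤ (2^i - 1) * ((l:ℝ)*(2:ℝ)^(-(b:ℤ))) := mul_le_mul_of_nonneg_right hgeom hpos
    have key : (2:ℝ)^i * (l:ℝ) * (2:ℝ)^(-(b:ℤ))
        = (l:ℝ) * (2:ℝ)^(-(b:ℤ)) + (2^i - 1) * ((l:ℝ)*(2:ℝ)^(-(b:ℤ))) := by ring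
    linarith [tri]
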